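/- arXiv:2208.00923 — 5 statements merged into one kernel-verified Lean document; each statement's English description precedes it below -/
import Mathlib

section
/- The comeager uniformization principle for all projective sets implies that every projective subset of ω^ω has the Baire property. -/
/-- The projective subsets of Baire space: generated from closed sets by complements and
continuous images. -/
inductive Projective : Set (ℕ → ℕ) → Prop
  | of_closed (A : Set (ℕ → ℕ)) : IsClosed A → Projective A
  | compl (A : Set (ℕ → ℕ)) : Projective A → Projective Aᶜ
  | image (A : Set (ℕ → ℕ)) (f : (ℕ → ℕ) → (ℕ → ℕ)) :
      Projective A → Continuous f → Projective (f '' A)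

/-- The canonical homeomorphism `ω^ω × ω^ω → ω^ω`, used to regard subsets of the product
as subsets of Baire space. -/
def pairFn : ((ℕ → ℕ) × (ℕ → ℕ)) → (ℕ → ℕ) := fun p n => Nat.pair (p.1 n) (p.2 n)

/-- A set has the Baire property if it differs from an open set by a meager set. -/
def HasBP {α : Type*} [TopologicalSpace α] (S : Set α) : Prop :=
  ∃ U : Set α, IsOpen U ∧ IsMeagre (symmDiff S U)

namespace CUBP

/-- first coordinate of the unpairing -/
def u1 (z : ℕ → ℕ) : ℕ → ℕ := fun n => (Nat.unpair (z n)).1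

/-- second coordinate of the unpairing -/
def u2 (z : ℕ → ℕ) : ℕ → ℕ := fun n => (Nat.unpair (z n)).2

/-- shift -/
def shiftF (z : ℕ → ℕ) : ℕ → ℕ := fun n => z (n + 1)

/-- cons -/
def consF (a : ℕ) (y : ℕ → ℕ) : ℕ → ℕ := fun n => Nat.rec a (fun k _ => y k) n

lemma cont_pairFn : Continuous pairFn := by
  apply continuous_pi
  intro n
  have h1 : Continuous (fun p : (ℕ → ℕ) × (ℕ → ℕ) => (p.1 n, p.2 n)) :=
    ((continuous_apply n).comp continuous_fst).prodMk ((continuous_apply n).comp continuous_snd)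
  exact (continuous_of_discreteTopology (f := fun q : ℕ × ℕ => Nat.pair q.1 q.2)).comp h1

lemma cont_u1 : Continuous u1 := by
  apply continuous_pi
  intro n
  exact (continuous_of_discreteTopology (f := fun k : ℕ => (Nat.unpair k).1)).comp
    (continuous_apply n)

lemma cont_u2 : Continuous u2 := by
  apply continuous_pi
  intro n
  exact (continuous_of_discreteTopology (f := fun k : ℕ => (Nat.unpair k).2)).comp
    (continuous_apply n)

lemma cont_shiftF : Continuous shiftF :=
  continuous_pi fun n => continuous_apply (n + 1)

@[simp] lemma u1_pairFn (x y : ℕ → ℕ) : u1 (pairFn (x, y)) = x := by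
  funext n; simp [u1, pairFn]

@[simp] lemma u2_pairFn (x y : ℕ → ℕ) : u2 (pairFn (x, y)) = y := by
  funext n; simp [u2, pairFn]

@[simp] lemma shiftF_consF (a : ℕ) (y : ℕ → ℕ) : shiftF (consF a y) = y := rfl

@[simp] lemma consF_zero (a : ℕ) (y : ℕ → ℕ) : consF a y 0 = a := rfl

/-- The projective hierarchy (Π-side). -/
def PiL : ℕ → Set (ℕ → ℕ) → Prop
  | 0, A => IsClosed A
  | (n+1), A => ∃ C g, PiL n C ∧ Continuous g ∧ Aᶜ = g '' C

/-- Σ-side of the hierarchy. -/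
def SigL (n : ℕ) (A : Set (ℕ → ℕ)) : Prop :=
  ∃ C g, PiL n C ∧ Continuous g ∧ A = g '' C

lemma piL_succ_iff {n : ℕ} {A : Set (ℕ → ℕ)} : PiL (n + 1) A ↔ SigL n Aᶜ := Iff.rfl

lemma sigL_of_piL {n : ℕ} {A : Set (ℕ → ℕ)} (h : PiL n A) : SigL n A :=
  ⟨A, id, h, continuous_id, (Set.image_id A).symm⟩

/-- Every open set is the shift-image of a closed set built from an Fσ decomposition. -/
lemma open_shift_image {O : Set (ℕ → ℕ)} (hO : IsOpen O) :
    ∃ D : Set (ℕ → ℕ), IsClosed D ∧ O = shiftF '' D := by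
  classical
  letI : MetricSpace (ℕ → ℕ) := TopologicalSpace.metrizableSpaceMetric (ℕ → ℕ)
  set C : ℕ → Set (ℕ → ℕ) := fun m => {x | ∀ y, y ∉ O → ((m : ℝ) + 1)⁻¹ ≤ dist x y} with hC
  have hCclosed : ∀ m, IsClosed (C m) := by
    intro m
    have : C m = ⋂ (y : ℕ → ℕ) (_ : y ∉ O), {x | ((m : ℝ) + 1)⁻¹ ≤ dist x y} := by
      ext x; simp [hC]
    rw [this]
    exact isClosed_iInter fun y => isClosed_iInter fun _ =>
      isClosed_le continuous_const (continuous_id.dist continuous_const)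
  have hCsub : ∀ m, C m ⊆ O := by
    intro m x hx
    by_contra hxO
    have := hx x hxO
    simp at this
    have hpos : (0 : ℝ) < ((m : ℝ) + 1)⁻¹ := by positivity
    linarith
  have hOsub : O ⊆ ⋃ m, C m := by
    intro x hx
    obtain ⟨ε, hε, hball⟩ := Metric.isOpen_iff.mp hO x hx
    obtain ⟨m, hm⟩ := exists_nat_one_div_lt hε
    refine Set.mem_iUnion.mpr ⟨m, ?_⟩
    intro y hy
    have : y ∉ Metric.ball x ε := fun h => hy (hball h)
    rw [Metric.mem_ball, dist_comm] at this
    push_neg at this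
    calc ((m : ℝ) + 1)⁻¹ = 1 / (m + 1) := by rw [one_div]
      _ ≤ ε := le_of_lt hm
      _ ≤ dist x y := this
  refine ⟨{z | shiftF z ∈ C (z 0)}, ?_, ?_⟩
  · rw [← isOpen_compl_iff]
    have : {z | shiftF z ∈ C (z 0)}ᶜ =
        ⋃ m, ((fun z : ℕ → ℕ => z 0) ⁻¹' {m}) ∩ shiftF ⁻¹' (C m)ᶜ := by
      ext z
      simp only [Set.mem_compl_iff, Set.mem_setOf_eq, Set.mem_iUnion, Set.mem_inter_iff,
        Set.mem_preimage, Set.mem_singleton_iff]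
      constructor
      · intro h; exact ⟨z 0, rfl, h⟩
      · rintro ⟨m, hm, h⟩; rwa [hm]
    rw [this]
    exact isOpen_iUnion fun m =>
      (((isOpen_discrete _).preimage (continuous_apply 0)).inter
        ((hCclosed m).isOpen_compl.preimage cont_shiftF))
  · ext x
    constructor
    · intro hx
      obtain ⟨m, hm⟩ := Set.mem_iUnion.mp (hOsub hx)
      exact ⟨consF m x, by simpa using hm, rfl⟩
    · rintro ⟨z, hz, rfl⟩
      exact hCsub _ hz

lemma closed_piL : ∀ n {C : Set (ℕ → ℕ)}, IsClosed C → PiL n C := by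
  intro n
  induction n with
  | zero => exact fun h => h
  | succ n ih =>
    intro C hC
    obtain ⟨D, hD, hDeq⟩ := open_shift_image hC.isOpen_compl
    exact ⟨D, shiftF, ih hD, cont_shiftF, hDeq⟩

lemma piL_closure : ∀ n,
    (∀ (A : Set (ℕ → ℕ)) (g : (ℕ → ℕ) → (ℕ → ℕ)), PiL n A → Continuous g → PiL n (g ⁻¹' A)) ∧
    (∀ A B : Set (ℕ → ℕ), PiL n A → PiL n B → PiL n (A ∩ B)) ∧
    (∀ A B : Set (ℕ → ℕ), PiL n A → PiL n B → PiL n (A ∪ B)) := by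
  intro n
  induction n with
  | zero =>
    exact ⟨fun A g hA hg => hA.preimage hg, fun A B hA hB => hA.inter hB,
      fun A B hA hB => hA.union hB⟩
  | succ n ih =>
    obtain ⟨ihp, ihi, ihu⟩ := ih
    -- Σ-level closure
    have sig_pre : ∀ (A : Set (ℕ → ℕ)) (g : (ℕ → ℕ) → (ℕ → ℕ)),
        SigL n A → Continuous g → SigL n (g ⁻¹' A) := by
      rintro A g ⟨C, f, hC, hf, rfl⟩ hg
      refine ⟨u2 ⁻¹' C ∩ {z | f (u2 z) = g (u1 z)}, u1,
        ihi _ _ (ihp C u2 hC cont_u2)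
          (closed_piL n (isClosed_eq (hf.comp cont_u2) (hg.comp cont_u1))),
        cont_u1, ?_⟩
      ext x
      constructor
      · rintro ⟨y, hyC, hfy⟩
        exact ⟨pairFn (x, y), ⟨by simpa using hyC, by simp [hfy]⟩, by simp⟩
      · rintro ⟨z, ⟨hz1, hz2⟩, rfl⟩
        exact ⟨u2 z, hz1, hz2⟩
    have sig_inter : ∀ A B : Set (ℕ → ℕ), SigL n A → SigL n B → SigL n (A ∩ B) := by
      rintro A B ⟨C, f, hC, hf, rfl⟩ ⟨D, h, hD, hh, rfl⟩
      refine ⟨u1 ⁻¹' C ∩ u2 ⁻¹' D ∩ {z | f (u1 z) = h (u2 z)}, fun z => f (u1 z),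
        ihi _ _ (ihi _ _ (ihp C u1 hC cont_u1) (ihp D u2 hD cont_u2))
          (closed_piL n (isClosed_eq (hf.comp cont_u1) (hh.comp cont_u2))),
        hf.comp cont_u1, ?_⟩
      ext x
      constructor
      · rintro ⟨⟨y, hyC, rfl⟩, ⟨w, hwD, hw⟩⟩
        exact ⟨pairFn (y, w), ⟨⟨by simpa using hyC, by simpa using hwD⟩, by simp [hw]⟩, by simp⟩
      · rintro ⟨z, ⟨⟨hz1, hz2⟩, hz3⟩, rfl⟩
        exact ⟨⟨u1 z, hz1, rfl⟩, ⟨u2 z, hz2, hz3.symm⟩⟩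
    have sig_union : ∀ A B : Set (ℕ → ℕ), SigL n A → SigL n B → SigL n (A ∪ B) := by
      classical
      rintro A B ⟨C, f, hC, hf, rfl⟩ ⟨D, h, hD, hh, rfl⟩
      have hclop : IsClopen {z : ℕ → ℕ | z 0 = 0} := by
        have he : {z : ℕ → ℕ | z 0 = 0} = (fun z : ℕ → ℕ => z 0) ⁻¹' {0} := rfl
        rw [he]
        exact ⟨(isClosed_discrete _).preimage (continuous_apply 0),
          (isOpen_discrete _).preimage (continuous_apply 0)⟩
      have hm : Continuous (fun z : ℕ → ℕ => if z 0 = 0 then f (shiftF z) else h (shiftF z)) := by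
        refine Continuous.if ?_ (hf.comp cont_shiftF) (hh.comp cont_shiftF)
        intro a ha
        rw [hclop.frontier_eq] at ha
        exact absurd ha (Set.notMem_empty a)
      refine ⟨({z : ℕ → ℕ | z 0 = 0} ∩ shiftF ⁻¹' C) ∪ ({z : ℕ → ℕ | z 0 = 0}ᶜ ∩ shiftF ⁻¹' D),
        fun z => if z 0 = 0 then f (shiftF z) else h (shiftF z),
        ihu _ _ (ihi _ _ (closed_piL n hclop.isClosed) (ihp C shiftF hC cont_shiftF))
          (ihi _ _ (closed_piL n hclop.compl.isClosed) (ihp D shiftF hD cont_shiftF)),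
        hm, ?_⟩
      ext x
      constructor
      · rintro (⟨y, hyC, rfl⟩ | ⟨w, hwD, rfl⟩)
        · exact ⟨consF 0 y, Or.inl ⟨by simp, by simpa using hyC⟩, by simp⟩
        · exact ⟨consF 1 w, Or.inr ⟨by simp, by simpa using hwD⟩, by simp⟩
      · rintro ⟨z, (⟨hz0, hzC⟩ | ⟨hz0, hzD⟩), rfl⟩
        · have hz0' : z 0 = 0 := hz0
          exact Or.inl ⟨shiftF z, hzC, (if_pos hz0').symm⟩
        · have hz0' : ¬ z 0 = 0 := hz0
          exact Or.inr ⟨shiftF z, hzD, (if_neg hz0').symm⟩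
    -- Π-level closure at n+1
    refine ⟨?_, ?_, ?_⟩
    · intro A g hA hg
      rw [piL_succ_iff] at hA ⊢
      have : (g ⁻¹' A)ᶜ = g ⁻¹' Aᶜ := rfl
      rw [this]
      exact sig_pre _ g hA hg
    · intro A B hA hB
      rw [piL_succ_iff] at hA hB ⊢
      rw [Set.compl_inter]
      exact sig_union _ _ hA hB
    · intro A B hA hB
      rw [piL_succ_iff] at hA hB ⊢
      rw [Set.compl_union]
      exact sig_inter _ _ hA hB

lemma piL_mono : ∀ n {A : Set (ℕ → ℕ)}, PiL n A → PiL (n + 1) A := by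
  intro n
  induction n with
  | zero =>
    intro A hA
    rw [piL_succ_iff]
    obtain ⟨D, hD, hDeq⟩ := open_shift_image hA.isOpen_compl
    exact ⟨D, shiftF, hD, cont_shiftF, hDeq⟩
  | succ n ih =>
    rintro A ⟨C, g, hC, hg, hA⟩
    exact ⟨C, g, ih hC, hg, hA⟩

lemma piL_le {m n : ℕ} (h : m ≤ n) {A : Set (ℕ → ℕ)} (hA : PiL m A) : PiL n A := by
  induction h with
  | refl => exact hA
  | step _ ih => exact piL_mono _ ih

lemma piL_compl {n : ℕ} {A : Set (ℕ → ℕ)} (hA : PiL n A) : PiL (n + 1) Aᶜ := by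
  rw [piL_succ_iff, compl_compl]
  exact sigL_of_piL hA

lemma sigL_piL {n : ℕ} {A : Set (ℕ → ℕ)} (hA : SigL n A) : PiL (n + 2) A := by
  have h1 : PiL (n + 1) Aᶜ := by rw [piL_succ_iff, compl_compl]; exact hA
  have := piL_compl h1
  rwa [compl_compl] at this

lemma projective_piL {A : Set (ℕ → ℕ)} (hA : Projective A) : ∃ n, PiL n A := by
  induction hA with
  | of_closed A h => exact ⟨0, h⟩
  | compl A _ ih => obtain ⟨n, hn⟩ := ih; exact ⟨n + 1, piL_compl hn⟩
  | image A f _ hf ih =>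
    obtain ⟨n, hn⟩ := ih
    exact ⟨n + 2, sigL_piL ⟨A, f, hn, hf, rfl⟩⟩

lemma piL_projective : ∀ n {A : Set (ℕ → ℕ)}, PiL n A → Projective A := by
  intro n
  induction n with
  | zero => exact fun h => Projective.of_closed _ h
  | succ n ih =>
    rintro A ⟨C, g, hC, hg, hA⟩
    have : Projective (g '' C)ᶜ := Projective.compl _ (Projective.image _ _ (ih hC) hg)
    rw [← hA, compl_compl] at this
    exact this

lemma Projective.union {A B : Set (ℕ → ℕ)} (hA : Projective A) (hB : Projective B) :
    Projective (A ∪ B) := by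
  obtain ⟨n, hn⟩ := projective_piL hA
  obtain ⟨m, hm⟩ := projective_piL hB
  exact piL_projective (max n m)
    ((piL_closure (max n m)).2.2 A B (piL_le (le_max_left n m) hn)
      (piL_le (le_max_right n m) hm))

end CUBP

open CUBP in
/-- The comeager uniformization principle for projective sets implies that every
projective subset of Baire space has the Baire property. -/
theorem stmt_6
    (hCU : ∀ X : Set ((ℕ → ℕ) × (ℕ → ℕ)), Projective (pairFn '' X) →
      (∀ x : ℕ → ℕ, ∃ y : ℕ → ℕ, (x, y) ∈ X) →
      ∃ B : Set (ℕ → ℕ), B ∈ residual (ℕ → ℕ) ∧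
        ∃ f : (ℕ → ℕ) → (ℕ → ℕ), ContinuousOn f B ∧ ∀ x ∈ B, (x, f x) ∈ X) :
    ∀ A : Set (ℕ → ℕ), Projective A → HasBP A := by
  classical
  intro A hA
  set c1 : ℕ → ℕ := fun _ => 1 with hc1
  set c0 : ℕ → ℕ := fun _ => 0 with hc0
  set X : Set ((ℕ → ℕ) × (ℕ → ℕ)) :=
    (A ×ˢ ({c1} : Set (ℕ → ℕ))) ∪ (Aᶜ ×ˢ ({c0} : Set (ℕ → ℕ))) with hX
  have hconst : ∀ c : ℕ → ℕ, Continuous (fun x => pairFn (x, c)) := fun c =>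
    cont_pairFn.comp (continuous_id.prodMk continuous_const)
  have himg : ∀ (S : Set (ℕ → ℕ)) (c : ℕ → ℕ),
      pairFn '' (S ×ˢ ({c} : Set (ℕ → ℕ))) = (fun x => pairFn (x, c)) '' S := by
    intro S c
    ext t
    constructor
    · rintro ⟨⟨x, y⟩, ⟨hx, hy⟩, rfl⟩
      have hy' : y = c := hy
      exact ⟨x, hx, by rw [hy']⟩
    · rintro ⟨x, hx, rfl⟩
      exact ⟨(x, c), ⟨hx, rfl⟩, rfl⟩
  have hXproj : Projective (pairFn '' X) := by
    rw [hX, Set.image_union, himg, himg]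
    exact CUBP.Projective.union
      (Projective.image _ _ hA (hconst c1))
      (Projective.image _ _ (Projective.compl _ hA) (hconst c0))
  have hXsec : ∀ x : ℕ → ℕ, ∃ y : ℕ → ℕ, (x, y) ∈ X := by
    intro x
    by_cases hx : x ∈ A
    · exact ⟨c1, Or.inl ⟨hx, rfl⟩⟩
    · exact ⟨c0, Or.inr ⟨hx, rfl⟩⟩
  obtain ⟨B, hB, f, hfc, hfX⟩ := hCU X hXproj hXsec
  have hone : ∀ x ∈ B, x ∈ A → f x 0 = 1 := by
    intro x hxB hxA
    rcases hfX x hxB with ⟨_, hy⟩ | ⟨hxA', _⟩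
    · have hy' : f x = c1 := hy
      rw [hy']
    · exact absurd hxA hxA'
  have hzero : ∀ x ∈ B, x ∉ A → f x 0 = 0 := by
    intro x hxB hxA
    rcases hfX x hxB with ⟨hxA', _⟩ | ⟨_, hy⟩
    · exact absurd hxA' hxA
    · have hy' : f x = c0 := hy
      rw [hy']
  have hVopen : IsOpen {y : ℕ → ℕ | y 0 = 1} := by
    have he : {y : ℕ → ℕ | y 0 = 1} = (fun y : ℕ → ℕ => y 0) ⁻¹' {1} := rfl
    rw [he]
    exact (isOpen_discrete _).preimage (continuous_apply 0)
  obtain ⟨U, hUopen, hU⟩ := (continuousOn_iff'.mp hfc) _ hVopen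
  refine ⟨U, hUopen, ?_⟩
  have hsub : symmDiff A U ⊆ Bᶜ := by
    intro x hx
    intro hxB
    rw [Set.mem_symmDiff] at hx
    rcases hx with ⟨hxA, hxU⟩ | ⟨hxU, hxA⟩
    · have : x ∈ f ⁻¹' {y : ℕ → ℕ | y 0 = 1} ∩ B := ⟨hone x hxB hxA, hxB⟩
      rw [hU] at this
      exact hxU this.1
    · have : x ∈ f ⁻¹' {y : ℕ → ℕ | y 0 = 1} ∩ B := by rw [hU]; exact ⟨hxU, hxB⟩
      have h1 : f x 0 = 1 := this.1
      have h0 : f x 0 = 0 := hzero x hxB hxA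
      rw [h0] at h1
      exact absurd h1 one_ne_zero.symm
  have hBc : IsMeagre Bᶜ := by rwa [IsMeagre, compl_compl]
  exact hBc.mono hsub
end

section
/- Let λ be a limit ordinal and let ⟨R_α : α < λ⟩ be an increasing sequence of subsets of 2^ω with ⋃_{α<λ} R_α = 2^ω, such that for every perfect closed set P ⊆ 2^ω there exists β < λ with P ∩ (R_{α+1} \ R_α) ≠ ∅ for every α with β ≤ α < λ. Then the set B := ⋃_{α<λ, α even} (R_{α+1} \ R_α) is a Bernstein set: neither B nor its complement contains a perfect closed set. -/
/-- An ordinal is even if it is of the form `δ + 2n` with `δ` zero or a limit ordinal. -/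
def EvenOrd (α : Ordinal) : Prop :=
  ∃ (δ : Ordinal) (n : ℕ), (δ = 0 ∨ Order.IsSuccLimit δ) ∧ α = δ + 2 * n

open Ordinal in
lemma evenOrd_iff_mod (α : Ordinal) :
    EvenOrd α ↔ ∃ n : ℕ, α % ω = n ∧ Even n := by
  constructor
  · rintro ⟨δ, n, hδ, rfl⟩
    refine ⟨2 * n, ?_, even_two_mul n⟩
    have h2n : ((2 * n : ℕ) : Ordinal) = 2 * n := natCast_mul 2 n
    have hlt : ((2 * n : ℕ) : Ordinal) < ω := nat_lt_omega0 _
    obtain ⟨q, rfl⟩ : ∃ q, δ = ω * q := by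
      rcases hδ with h | h
      · exact ⟨0, by simp [h]⟩
      · exact isSuccPrelimit_iff_omega0_dvd.1 h.isSuccPrelimit
    rw [← h2n, mul_add_mod_self, mod_eq_of_lt hlt]
  · rintro ⟨n, hn, m, rfl⟩
    refine ⟨ω * (α / ω), m, ?_, ?_⟩
    · rcases eq_or_ne (α / ω) 0 with h | h
      · left; simp [h]
      · right; exact isSuccLimit_mul_left isSuccLimit_omega0 (pos_iff_ne_zero.2 h)
    · have := div_add_mod α ω
      rw [hn] at this
      have h2 : ((m + m : ℕ) : Ordinal) = 2 * m := by rw [← Nat.two_mul]; exact natCast_mul 2 m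
      rw [h2] at this
      exact this.symm

open Ordinal in
lemma evenOrd_succ_iff (α : Ordinal) : EvenOrd (α + 1) ↔ ¬ EvenOrd α := by
  obtain ⟨n, hn⟩ : ∃ n : ℕ, α % ω = n := lt_omega0.1 (mod_lt α omega0_ne_zero)
  have hsucc : (α + 1) % ω = ((n + 1 : ℕ) : Ordinal) := by
    have := div_add_mod α ω
    rw [hn] at this
    have key : α + 1 = ω * (α / ω) + ((n + 1 : ℕ) : Ordinal) := by
      calc α + 1 = (ω * (α / ω) + (n : Ordinal)) + 1 := by rw [this]
        _ = ω * (α / ω) + ((n + 1 : ℕ) : Ordinal) := by push_cast; rw [add_assoc]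
    rw [key, mul_add_mod_self, mod_eq_of_lt (nat_lt_omega0 _)]
  rw [evenOrd_iff_mod, evenOrd_iff_mod]
  constructor
  · rintro ⟨m, hm, hme⟩ ⟨k, hk, hke⟩
    rw [hsucc] at hm
    rw [hn] at hk
    have hm' : n + 1 = m := Nat.cast_injective hm
    have hk' : n = k := Nat.cast_injective hk
    subst hm' hk'
    exact (Nat.even_add_one.1 hme) hke
  · intro h
    refine ⟨n + 1, hsucc, ?_⟩
    rw [Nat.even_add_one]
    intro hne
    exact h ⟨n, hn, hne⟩

/-- Given an increasing, exhaustive λ-sequence of sets of reals such that every perfect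
closed set eventually meets every difference `R (α+1) \ R α`, the union of the
differences at even stages is a Bernstein set. -/
theorem stmt_10 (lam : Ordinal) (hlim : Order.IsSuccLimit lam)
    (R : Ordinal → Set (ℕ → Bool))
    (hmono : ∀ α β : Ordinal, α ≤ β → β < lam → R α ⊆ R β)
    (hunion : ⋃ α ∈ {α : Ordinal | α < lam}, R α = Set.univ)
    (hperf : ∀ P : Set (ℕ → Bool), Perfect P → P.Nonempty →
      ∃ β < lam, ∀ α : Ordinal, β ≤ α → α < lam → (P ∩ (R (α + 1) \ R α)).Nonempty) :
    ∀ P : Set (ℕ → Bool), Perfect P → P.Nonempty →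
      ¬ P ⊆ (⋃ α ∈ {α : Ordinal | α < lam ∧ EvenOrd α}, R (α + 1) \ R α) ∧
      ¬ P ⊆ (⋃ α ∈ {α : Ordinal | α < lam ∧ EvenOrd α}, R (α + 1) \ R α)ᶜ := by
  intro P hP hPne
  obtain ⟨β, hβ, hall⟩ := hperf P hP hPne
  have hβ1 : β + 1 < lam := hlim.succ_lt hβ
  -- disjointness of differences
  have hdisj : ∀ γ α : Ordinal, γ < lam → α < lam →
      ∀ x, x ∈ R (γ + 1) \ R γ → x ∈ R (α + 1) \ R α → γ = α := by
    intro γ α hγ hα x hxγ hxα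
    rcases lt_trichotomy γ α with h | h | h
    · exact absurd (hmono (γ + 1) α (Order.add_one_le_iff.2 h) hα hxγ.1) hxα.2
    · exact h
    · exact absurd (hmono (α + 1) γ (Order.add_one_le_iff.2 h) hγ hxα.1) hxγ.2
  -- even and odd stages ≥ β below lam
  obtain ⟨αe, hαe_ge, hαe_lt, hαe⟩ : ∃ α, β ≤ α ∧ α < lam ∧ EvenOrd α := by
    by_cases h : EvenOrd β
    · exact ⟨β, le_refl _, hβ, h⟩
    · exact ⟨β + 1, le_of_lt (lt_add_one β), hβ1, (evenOrd_succ_iff β).2 h⟩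
  obtain ⟨αo, hαo_ge, hαo_lt, hαo⟩ : ∃ α, β ≤ α ∧ α < lam ∧ ¬ EvenOrd α := by
    by_cases h : EvenOrd β
    · exact ⟨β + 1, le_of_lt (lt_add_one β), hβ1, fun h' => ((evenOrd_succ_iff β).1 h') h⟩
    · exact ⟨β, le_refl _, hβ, h⟩
  constructor
  · -- odd witness not in B
    obtain ⟨x, hxP, hxd⟩ := hall αo hαo_ge hαo_lt
    intro hsub
    obtain ⟨_, ⟨γ, rfl⟩, _, ⟨⟨hγlt, hγeven⟩, rfl⟩, hxγ⟩ := hsub hxP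
    exact hαo (hdisj γ αo hγlt hαo_lt x hxγ hxd ▸ hγeven)
  · -- even witness in B
    obtain ⟨x, hxP, hxd⟩ := hall αe hαe_ge hαe_lt
    intro hsub
    exact (hsub hxP) (Set.mem_biUnion ⟨hαe_lt, hαe⟩ hxd)
end

section
/- Let ⟨d_α : α < κ⟩ be a partition of 2^ω into nonempty sets indexed by a limit ordinal κ, such that for every perfect closed set P ⊆ 2^ω there exists β < κ with P ∩ d_α ≠ ∅ for all α with β < α < κ. Then B := ⋃_{α<κ} d_{2α} is a Bernstein set. -/
/-- Given a partition `⟨d α : α < κ⟩` of Cantor space indexed by an additively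
indecomposable limit ordinal `κ`, such that every perfect closed set meets all
sufficiently late pieces, the union of the even-indexed pieces `d (2·α)` is a
Bernstein set. -/
theorem stmt_11 (κ : Ordinal) (hκ : Order.IsSuccLimit κ) (hInd : ∀ α < κ, 2 * α < κ)
    (d : Ordinal → Set (ℕ → Bool))
    (hne : ∀ α < κ, (d α).Nonempty)
    (hdisj : ∀ α < κ, ∀ β < κ, α ≠ β → Disjoint (d α) (d β))
    (hcover : ⋃ α ∈ {α : Ordinal | α < κ}, d α = Set.univ)
    (hperf : ∀ P : Set (ℕ → Bool), Perfect P → P.Nonempty →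
      ∃ β < κ, ∀ α : Ordinal, β < α → α < κ → (P ∩ d α).Nonempty) :
    ∀ P : Set (ℕ → Bool), Perfect P → P.Nonempty →
      ¬ P ⊆ (⋃ α ∈ {α : Ordinal | α < κ}, d (2 * α)) ∧
      ¬ P ⊆ (⋃ α ∈ {α : Ordinal | α < κ}, d (2 * α))ᶜ := by
  intro P hP hPne
  obtain ⟨β, hβκ, h⟩ := hperf P hP hPne
  constructor
  · -- P contains a point in an odd piece d (2β+1)
    intro hsub
    have h2β : 2 * β < κ := hInd β hβκ
    have hγκ : 2 * β + 1 < κ := by rw [Ordinal.add_one_eq_succ]; exact hκ.succ_lt h2β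
    have hβγ : β < 2 * β + 1 :=
      lt_of_le_of_lt (Ordinal.le_mul_right β (by norm_num)) (lt_add_one _)
    obtain ⟨x, hxP, hxd⟩ := h (2 * β + 1) hβγ hγκ
    have hx := hsub hxP
    simp only [Set.mem_setOf_eq, Set.mem_iUnion] at hx
    obtain ⟨α, hακ, hxd'⟩ := hx
    have hne' : (2 : Ordinal) * β + 1 ≠ 2 * α := by
      intro heq
      have h1 : ((2 : Ordinal) * β + 1) % 2 = 1 % 2 := Ordinal.mul_add_mod_self 2 β 1
      rw [heq, Ordinal.mul_mod] at h1
      have : (1 : Ordinal) % 2 = 1 := Ordinal.mod_eq_of_lt (by norm_num)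
      rw [this] at h1
      exact one_ne_zero h1.symm
    exact Set.disjoint_left.mp
      (hdisj (2 * β + 1) hγκ (2 * α) (hInd α hακ) hne') hxd hxd'
  · -- P contains a point in an even piece d (2(β+1))
    intro hsub
    have hβ1 : β + 1 < κ := by rw [Ordinal.add_one_eq_succ]; exact hκ.succ_lt hβκ
    have hγκ : 2 * (β + 1) < κ := hInd (β + 1) hβ1
    have hβγ : β < 2 * (β + 1) :=
      lt_of_lt_of_le (lt_add_one β) (Ordinal.le_mul_right (β + 1) (by norm_num))
    obtain ⟨x, hxP, hxd⟩ := h (2 * (β + 1)) hβγ hγκ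
    apply hsub hxP
    simp only [Set.mem_setOf_eq, Set.mem_iUnion]
    exact ⟨β + 1, hβ1, hxd⟩
end

section
/- Assume the Continuum Hypothesis (with AC). Then there exists a Luzin set: an uncountable set L ⊆ ℝ such that L ∩ M is countable for every meager set M ⊆ ℝ. -/
open Set Cardinal Ordinal

/-- Decode a set of rational pairs into a closed nowhere dense set of reals. -/
noncomputable def luzinCode (S : Set (ℚ × ℚ)) : Set ℝ :=
  frontier ((⋃ p ∈ S, Ioo (p.1 : ℝ) (p.2 : ℝ))ᶜ)

lemma luzinCode_closed (S : Set (ℚ × ℚ)) : IsClosed (luzinCode S) := isClosed_frontier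

lemma luzinCode_nwd (S : Set (ℚ × ℚ)) : IsNowhereDense (luzinCode S) := by
  rw [(luzinCode_closed S).isNowhereDense_iff, luzinCode]
  exact interior_frontier (by
    have : IsOpen (⋃ p ∈ S, Ioo (p.1 : ℝ) (p.2 : ℝ)) :=
      isOpen_biUnion fun p _ => isOpen_Ioo
    exact this.isClosed_compl)

lemma luzinCode_meagre (S : Set (ℚ × ℚ)) : IsMeagre (luzinCode S) := by
  have h := (isClosed_isNowhereDense_iff_compl).mp ⟨luzinCode_closed S, luzinCode_nwd S⟩
  exact residual_of_dense_open h.1 h.2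

/-- Every closed nowhere dense subset of ℝ is a `luzinCode`. -/
lemma luzinCode_surj {F : Set ℝ} (hF : IsClosed F) (hnwd : IsNowhereDense F) :
    ∃ S : Set (ℚ × ℚ), luzinCode S = F := by
  refine ⟨{p : ℚ × ℚ | Ioo (p.1 : ℝ) (p.2 : ℝ) ⊆ Fᶜ}, ?_⟩
  have hU : (⋃ p ∈ {p : ℚ × ℚ | Ioo (p.1 : ℝ) (p.2 : ℝ) ⊆ Fᶜ},
      Ioo (p.1 : ℝ) (p.2 : ℝ)) = Fᶜ := by
    ext x
    simp only [mem_iUnion, mem_setOf_eq]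
    constructor
    · rintro ⟨p, hp, hx⟩; exact hp hx
    · intro hx
      obtain ⟨t, ht, hxt, htU⟩ :=
        Real.isTopologicalBasis_Ioo_rat.exists_subset_of_mem_open hx hF.isOpen_compl
      simp only [mem_iUnion, mem_singleton_iff] at ht
      obtain ⟨a, b, -, rfl⟩ := ht
      exact ⟨(a, b), htU, hxt⟩
  rw [luzinCode, hU, compl_compl, hF.frontier_eq,
    hF.isNowhereDense_iff.mp hnwd, diff_empty]

open scoped Classical in
noncomputable def luzinIdx (t : Set ℝ) : Set (ℚ × ℚ) :=
  if h : IsNowhereDense t then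
    Classical.choose (luzinCode_surj isClosed_closure h.closure)
  else ∅

lemma luzinIdx_spec {t : Set ℝ} (h : IsNowhereDense t) :
    luzinCode (luzinIdx t) = closure t := by
  rw [luzinIdx, dif_pos h]
  exact Classical.choose_spec (luzinCode_surj isClosed_closure h.closure)

lemma countable_isMeagre {s : Set ℝ} (hs : s.Countable) : IsMeagre s := by
  have : sᶜ = ⋂ x ∈ s, ({x} : Set ℝ)ᶜ := by
    simp [← compl_iUnion₂, biUnion_of_singleton]
  rw [IsMeagre, this]
  exact (countable_bInter_mem hs).mpr fun x _ =>
    residual_of_dense_open isOpen_compl_singleton (dense_compl_singleton x)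

/-- CH implies the existence of a Luzin set: an uncountable set of reals meeting every
meager set in a countable set. -/
theorem stmt_13 (hCH : Cardinal.continuum = Cardinal.aleph 1) :
    ∃ L : Set ℝ, ¬ L.Countable ∧ ∀ M : Set ℝ, IsMeagre M → (L ∩ M).Countable := by
  classical
  obtain ⟨r, wo, hr⟩ := Cardinal.ord_eq (Set (ℚ × ℚ))
  haveI := wo
  have hI : #(Set (ℚ × ℚ)) = Cardinal.aleph 1 := by
    rw [Cardinal.mk_set, Cardinal.mk_denumerable, Cardinal.two_power_aleph0]
    apply Cardinal.lift_injective.{_, 0}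
    rw [Cardinal.lift_continuum, Cardinal.lift_aleph]
    simpa using hCH
  -- initial segments are countable
  have hseg : ∀ i : Set (ℚ × ℚ), {j | r j i}.Countable := by
    intro i
    rw [Cardinal.countable_iff_lt_aleph_one, ← hI]
    exact Cardinal.card_typein_lt (r := r) i hr
  have hseg' : ∀ i : Set (ℚ × ℚ), {j | ¬ r i j}.Countable := by
    intro i
    refine ((hseg i).insert i).mono ?_
    intro j hj
    rcases trichotomous_of r j i with h | h | h
    · exact Or.inr h
    · exact Or.inl h
    · exact absurd h hj
  -- the "bad" set to avoid at stage i, given previous choices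
  set bad : ∀ i : Set (ℚ × ℚ), (∀ j, r j i → ℝ) → Set ℝ := fun i rec =>
    (⋃ j ∈ {j | ¬ r i j}, luzinCode j) ∪
      (⋃ j ∈ {j | r j i}, {rec j ‹j ∈ {j | r j i}›}) with hbad_def
  have hbadM : ∀ i rec, IsMeagre (bad i rec) := by
    intro i rec
    rw [IsMeagre, compl_union]
    refine Filter.inter_mem ?_ ?_
    · rw [compl_iUnion₂]
      exact (countable_bInter_mem (hseg' i)).mpr fun j _ => luzinCode_meagre j
    · have : (⋃ j ∈ {j | r j i}, ({rec j ‹_›} : Set ℝ)).Countable :=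
        (hseg i).biUnion fun j _ => countable_singleton _
      exact countable_isMeagre this
  have hne : ∀ i rec, (bad i rec)ᶜ.Nonempty := fun i rec =>
    (dense_of_mem_residual (hbadM i rec)).nonempty
  -- transfinite recursion
  let x : Set (ℚ × ℚ) → ℝ :=
    IsWellFounded.fix r (fun i rec => (hne i rec).some)
  have hx : ∀ i, x i ∉ bad i (fun j _ => x j) := by
    intro i
    have heq : x i = (hne i (fun j _ => x j)).some :=
      IsWellFounded.fix_eq r (fun i rec => (hne i rec).some) i
    rw [heq]
    exact (hne i (fun j _ => x j)).some_mem
  have hx1 : ∀ i j, ¬ r i j → x i ∉ luzinCode j := by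
    intro i j h hmem
    exact hx i (Or.inl (mem_biUnion h hmem))
  have hx2 : ∀ i j, r j i → x i ≠ x j := by
    intro i j h heq
    exact hx i (Or.inr (mem_biUnion h (by rw [heq]; exact rfl)))
  have hinj : Function.Injective x := by
    intro i j hij
    by_contra hne'
    rcases trichotomous_of r i j with h | h | h
    · exact hx2 j i h hij.symm
    · exact hne' h
    · exact hx2 i j h hij
  refine ⟨Set.range x, ?_, ?_⟩
  · intro hc
    rw [Cardinal.countable_iff_lt_aleph_one, Cardinal.mk_range_eq x hinj, hI] at hc
    exact lt_irrefl _ hc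
  · intro M hM
    obtain ⟨S, hSnwd, hSc, hSsub⟩ := isMeagre_iff_countable_union_isNowhereDense.mp hM
    -- each element of range x ∩ M lies in some luzinCode with small index
    have key : Set.range x ∩ M ⊆ ⋃ t ∈ S, x '' {j | r j (luzinIdx t)} := by
      rintro y ⟨⟨i, rfl⟩, hyM⟩
      obtain ⟨t, htS, hyt⟩ := hSsub hyM
      have hmem : x i ∈ luzinCode (luzinIdx t) := by
        rw [luzinIdx_spec (hSnwd t htS)]; exact subset_closure hyt
      have hri : r i (luzinIdx t) := by
        by_contra hcon
        exact hx1 i (luzinIdx t) hcon hmem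
      exact mem_biUnion htS ⟨i, hri, rfl⟩
    refine Set.Countable.mono key ?_
    exact hSc.biUnion fun t ht => ((hseg _).image x)
end

section
/- Assume the Continuum Hypothesis (with AC). Then there exists a Sierpiński set: an uncountable set S ⊆ ℝ such that S ∩ N is countable for every Lebesgue null set N ⊆ ℝ. -/
open Cardinal MeasureTheory Set
open scoped ENNReal

noncomputable section SierpinskiAux

/-- Decode a double sequence of rational pairs into a Gδ-style set. -/
def sierpG (f : ℕ → ℕ → ℚ × ℚ) : Set ℝ :=
  ⋂ n, ⋃ k, Ioo ((f n k).1 : ℝ) ((f n k).2 : ℝ)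

lemma sierp_open_code {U : Set ℝ} (hU : IsOpen U) :
    ∃ g : ℕ → ℚ × ℚ, U = ⋃ k, Ioo ((g k).1 : ℝ) ((g k).2 : ℝ) := by
  obtain ⟨S, hSB, hUS⟩ := Real.isTopologicalBasis_Ioo_rat.open_eq_sUnion hU
  have hScnt : S.Countable := by
    refine Set.Countable.mono hSB ?_
    refine Set.countable_iUnion fun a => Set.countable_iUnion fun b => ?_
    exact Set.countable_iUnion fun _ => Set.countable_singleton _
  have hform : ∀ s ∈ S, ∃ p : ℚ × ℚ, s = Ioo ((p.1 : ℝ)) (p.2 : ℝ) := by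
    intro s hs
    have := hSB hs
    simp only [Set.mem_iUnion, Set.mem_singleton_iff] at this
    obtain ⟨a, b, _, rfl⟩ := this
    exact ⟨(a, b), rfl⟩
  rcases S.eq_empty_or_nonempty with rfl | hne
  · refine ⟨fun _ => (0, 0), ?_⟩
    simp [hUS]
  · obtain ⟨F, rfl⟩ := hScnt.exists_eq_range hne
    choose p hp using hform
    refine ⟨fun k => p (F k) ⟨k, rfl⟩, ?_⟩
    rw [hUS, Set.sUnion_range]
    exact Set.iUnion_congr fun k => hp (F k) ⟨k, rfl⟩

lemma sierp_null_code {N : Set ℝ} (hN : volume N = 0) :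
    ∃ f : ℕ → ℕ → ℚ × ℚ, N ⊆ sierpG f ∧ volume (sierpG f) = 0 := by
  have step : ∀ n : ℕ, ∃ g : ℕ → ℚ × ℚ,
      N ⊆ (⋃ k, Ioo ((g k).1 : ℝ) ((g k).2 : ℝ)) ∧
      volume (⋃ k, Ioo ((g k).1 : ℝ) ((g k).2 : ℝ)) ≤ ((n : ℝ≥0∞))⁻¹ := by
    intro n
    have hlt : volume N < ((n : ℝ≥0∞) + 1)⁻¹ := by
      rw [hN]
      exact ENNReal.inv_pos.mpr (by simp)
    obtain ⟨U, hNU, hUopen, hUvol⟩ := Set.exists_isOpen_lt_of_lt N _ hlt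
    obtain ⟨g, rfl⟩ := sierp_open_code hUopen
    refine ⟨g, hNU, le_trans hUvol.le ?_⟩
    exact ENNReal.inv_le_inv.mpr (le_add_right le_rfl)
  choose f hf1 hf2 using step
  refine ⟨f, Set.subset_iInter hf1, ?_⟩
  by_contra h
  obtain ⟨n, hn⟩ := ENNReal.exists_inv_nat_lt h
  exact absurd (le_trans (measure_mono (Set.iInter_subset _ n)) (hf2 n)) (not_le.mpr hn)

end SierpinskiAux

/-- CH implies the existence of a Sierpiński set: an uncountable set of reals meeting
every Lebesgue null set in a countable set. -/
theorem stmt_14 (hCH : Cardinal.continuum = Cardinal.aleph 1) :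
    ∃ S : Set ℝ, ¬ S.Countable ∧
      ∀ N : Set ℝ, MeasureTheory.volume N = 0 → (S ∩ N).Countable := by
  classical
  set Ω := (Cardinal.aleph.{0} 1).ord.ToType with hΩ
  -- initial segments of Ω are countable
  have hseg : ∀ α : Ω, (Set.Iio α).Countable := by
    intro α
    rw [Cardinal.countable_iff_lt_aleph_one]
    exact Cardinal.mk_Iio_ord_toType α
  have hsegIic : ∀ α : Ω, (Set.Iic α).Countable := by
    intro α
    refine Set.Countable.mono ?_ ((hseg α).insert α)
    intro β hβ
    rcases eq_or_lt_of_le (Set.mem_Iic.mp hβ) with h | h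
    · exact Set.mem_insert_iff.mpr (Or.inl h)
    · exact Set.mem_insert_iff.mpr (Or.inr h)
  -- cardinality of the code space
  have hC : #(ℕ → ℕ → ℚ × ℚ) = Cardinal.continuum := by
    have h1 : #(ℕ → ℚ × ℚ) = Cardinal.continuum := by
      rw [← Cardinal.power_def, Cardinal.mk_denumerable, Cardinal.mk_denumerable,
        Cardinal.aleph0_power_aleph0]
    rw [← Cardinal.power_def, h1, Cardinal.mk_denumerable, Cardinal.continuum_power_aleph0]
  have hCH0 : Cardinal.continuum.{0} = Cardinal.aleph.{0} 1 := by
    apply Cardinal.lift_injective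
    rw [Cardinal.lift_continuum, Cardinal.lift_aleph, Ordinal.lift_one]
    exact hCH
  have hΩcard : #Ω = #(ℕ → ℕ → ℚ × ℚ) := by
    rw [hΩ, Cardinal.mk_toType, Cardinal.card_ord, hC, hCH0]
  obtain ⟨e⟩ : Nonempty (Ω ≃ (ℕ → ℕ → ℚ × ℚ)) := Cardinal.eq.mp hΩcard
  -- the null sets enumerated along Ω
  set Nf : Ω → Set ℝ := fun α => if volume (sierpG (e α)) = 0 then sierpG (e α) else ∅
    with hNf
  have hNfnull : ∀ α, volume (Nf α) = 0 := by
    intro α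
    by_cases h : volume (sierpG (e α)) = 0 <;> simp [hNf, h]
  have hNfsub : ∀ {N : Set ℝ}, volume N = 0 → ∃ α : Ω, N ⊆ Nf α := by
    intro N hN
    obtain ⟨f, hsub, hnull⟩ := sierp_null_code hN
    refine ⟨e.symm f, ?_⟩
    have : Nf (e.symm f) = sierpG f := by simp [hNf, Equiv.apply_symm_apply, hnull]
    rw [this]; exact hsub
  -- choose points avoiding all earlier null sets
  have key : ∀ α : Ω, ∃ x : ℝ, x ∉ ⋃ β ∈ Set.Iic α, Nf β := by
    intro α
    have hTnull : volume (⋃ β ∈ Set.Iic α, Nf β) = 0 :=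
      (measure_biUnion_null_iff (hsegIic α)).mpr fun β _ => hNfnull β
    have hne : (⋃ β ∈ Set.Iic α, Nf β)ᶜ.Nonempty := by
      rw [Set.nonempty_compl]
      intro h
      rw [h, Real.volume_univ] at hTnull
      exact ENNReal.top_ne_zero hTnull
    exact ⟨hne.some, hne.some_mem⟩
  choose x hx using key
  have hx' : ∀ {α β : Ω}, β ≤ α → x α ∉ Nf β := by
    intro α β hβα h
    exact hx α (Set.mem_biUnion (Set.mem_Iic.mpr hβα) h)
  refine ⟨Set.range x, ?_, ?_⟩
  · -- uncountable
    intro hcnt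
    obtain ⟨α, hsub⟩ := hNfsub (hcnt.measure_zero _)
    exact hx' le_rfl (hsub (Set.mem_range_self α))
  · -- meets every null set countably
    intro N hN
    obtain ⟨α, hsub⟩ := hNfsub hN
    have : Set.range x ∩ N ⊆ x '' Set.Iio α := by
      rintro y ⟨⟨β, rfl⟩, hyN⟩
      refine ⟨β, ?_, rfl⟩
      by_contra hβ
      exact hx' (not_lt.mp hβ) (hsub hyN)
    exact ((hseg α).image x).mono this
end
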